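/- Let α, β ∈ C[0,1] with α(t) < β(t) for all t. Let x ∈ C[0,1] satisfy x(0) ∈ (α(0), β(0)) and the regularity condition inf{ t > π(x) : x(t) ∉ [α(t), β(t)] } ∧ 1 = π(x). Then x ∈ C_1 ∪ C_2 ∪ C_3. -/

import Mathlib

open Set

/-- The first exit time `π(x) = inf{ t ∈ [0,1] : x(t) ∉ (α(t), β(t)) } ∧ 1`
(with the convention `inf ∅ = +∞`, realized by adjoining `{1}` before taking
the infimum, since the exit set is contained in `[0,1]`). -/
noncomputable def exitTime (a b x : ℝ → ℝ) : ℝ :=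
  sInf ({t ∈ Set.Icc (0:ℝ) 1 | x t ≤ a t ∨ b t ≤ x t} ∪ {1})

/-- Membership in `C_1`. -/
def MemC1 (a b x : ℝ → ℝ) : Prop :=
  ContinuousOn x (Set.Icc 0 1) ∧ exitTime a b x < 1 ∧
    x (exitTime a b x) = b (exitTime a b x) ∧
    sInf ({t | exitTime a b x < t ∧ t ≤ 1 ∧ b t < x t} ∪ {1}) = exitTime a b x

/-- Membership in `C_2`. -/
def MemC2 (a b x : ℝ → ℝ) : Prop :=
  ContinuousOn x (Set.Icc 0 1) ∧ exitTime a b x < 1 ∧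
    x (exitTime a b x) = a (exitTime a b x) ∧
    sInf ({t | exitTime a b x < t ∧ t ≤ 1 ∧ x t < a t} ∪ {1}) = exitTime a b x

/-- Membership in `C_3`. -/
def MemC3 (a b x : ℝ → ℝ) : Prop :=
  ContinuousOn x (Set.Icc 0 1) ∧ exitTime a b x = 1

/-- Auxiliary: if `sInf T = p`, `T' ⊆ T` with `1 ∈ T'`, `T` is bounded below by `p`,
and every element of `T` sufficiently close to `p` (from the right) lies in `T'`,
then `sInf T' = p`. -/
lemma aux_sInf_eq (p : ℝ) (T T' : Set ℝ) (hsub : T' ⊆ T) (h1T' : (1:ℝ) ∈ T')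
    (hTlb : ∀ t ∈ T, p < t) (hreg : sInf T = p)
    (δ : ℝ) (hδ : 0 < δ) (hnear : ∀ t ∈ T, p < t → t < p + δ → t ∈ T') :
    sInf T' = p := by
  have hTbdd : BddBelow T := ⟨p, fun t ht => (hTlb t ht).le⟩
  have hT'bdd : BddBelow T' := hTbdd.mono hsub
  have hge : p ≤ sInf T' := by
    rw [← hreg]
    exact csInf_le_csInf hTbdd ⟨1, h1T'⟩ hsub
  refine le_antisymm ?_ hge
  by_contra hcon
  push_neg at hcon
  have hT'le1 : sInf T' ≤ 1 := csInf_le hT'bdd h1T'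
  set m := min (sInf T') (p + δ) with hm
  have hmp : p < m := lt_min hcon (by linarith)
  have hmlb : ∀ t ∈ T, m ≤ t := by
    intro t ht
    by_contra htm
    push_neg at htm
    have ht' : t ∈ T' := hnear t ht (hTlb t ht) (lt_of_lt_of_le htm (min_le_right _ _))
    exact absurd (csInf_le hT'bdd ht')
      (not_le.mpr (lt_of_lt_of_le htm (min_le_left _ _)))
  have : m ≤ sInf T := le_csInf ⟨1, hsub h1T'⟩ hmlb
  rw [hreg] at this
  exact absurd this (not_le.mpr hmp)

/-- If `x ∈ C[0,1]` starts strictly inside the barriers,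
`x(0) ∈ (α(0), β(0))`, and satisfies the regularity condition
`inf{ t > π(x) : x(t) ∉ [α(t), β(t)] } ∧ 1 = π(x)`, then
`x ∈ C_1 ∪ C_2 ∪ C_3`. -/
theorem mem_C1_or_C2_or_C3 (a b : ℝ → ℝ)
    (ha : ContinuousOn a (Set.Icc 0 1)) (hb : ContinuousOn b (Set.Icc 0 1))
    (hab : ∀ t ∈ Set.Icc (0:ℝ) 1, a t < b t)
    (x : ℝ → ℝ) (hx : ContinuousOn x (Set.Icc 0 1))
    (hx0 : a 0 < x 0 ∧ x 0 < b 0)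
    (hreg : sInf ({t | exitTime a b x < t ∧ t ≤ 1 ∧ (x t < a t ∨ b t < x t)} ∪ {1})
      = exitTime a b x) :
    MemC1 a b x ∨ MemC2 a b x ∨ MemC3 a b x := by
  set S : Set ℝ := {t ∈ Set.Icc (0:ℝ) 1 | x t ≤ a t ∨ b t ≤ x t} ∪ {1} with hSdef
  have hπ : exitTime a b x = sInf S := rfl
  have hS1 : (1:ℝ) ∈ S := Or.inr rfl
  have hSne : S.Nonempty := ⟨1, hS1⟩
  have hSlb : ∀ t ∈ S, (0:ℝ) ≤ t := by
    intro t ht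
    rcases ht with ⟨⟨h0, _⟩, _⟩ | h1
    · exact h0
    · rw [mem_singleton_iff] at h1; rw [h1]; norm_num
  have hSbdd : BddBelow S := ⟨0, hSlb⟩
  have hπle1 : exitTime a b x ≤ 1 := by rw [hπ]; exact csInf_le hSbdd hS1
  have hπ0 : 0 ≤ exitTime a b x := by rw [hπ]; exact le_csInf hSne hSlb
  rcases eq_or_lt_of_le hπle1 with heq | hlt
  · exact Or.inr (Or.inr ⟨hx, heq⟩)
  · have hSclosed : IsClosed S := by
      have hf : ContinuousOn (fun t => min (x t - a t) (b t - x t)) (Set.Icc 0 1) :=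
        fun t ht => ((hx t ht).sub (ha t ht)).min ((hb t ht).sub (hx t ht))
      have h1 : {t ∈ Set.Icc (0:ℝ) 1 | x t ≤ a t ∨ b t ≤ x t}
          = Set.Icc (0:ℝ) 1 ∩ (fun t => min (x t - a t) (b t - x t)) ⁻¹' Set.Iic 0 := by
        ext t
        simp only [mem_sep_iff, mem_inter_iff, mem_preimage, mem_Iic, min_le_iff, sub_nonpos]
      rw [hSdef, h1]
      exact (hf.preimage_isClosed_of_isClosed isClosed_Icc isClosed_Iic).union
        isClosed_singleton
    have hπmem : exitTime a b x ∈ S := by rw [hπ]; exact hSclosed.csInf_mem hSne hSbdd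
    have hπS : exitTime a b x ∈ Set.Icc (0:ℝ) 1 ∧
        (x (exitTime a b x) ≤ a (exitTime a b x) ∨
          b (exitTime a b x) ≤ x (exitTime a b x)) := by
      rcases hπmem with h | h
      · exact h
      · rw [mem_singleton_iff] at h; exact absurd h (ne_of_lt hlt)
    have hπpos : 0 < exitTime a b x := by
      rcases lt_or_eq_of_le hπ0 with h | h
      · exact h
      · exfalso
        rw [← h] at hπS
        rcases hπS.2 with h' | h'
        · exact absurd h' (not_le.mpr hx0.1)
        · exact absurd h' (not_le.mpr hx0.2)
    have hmemnhds : Set.Icc (0:ℝ) 1 ∈ nhds (exitTime a b x) :=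
      Filter.mem_of_superset (Ioo_mem_nhds hπpos hlt) Ioo_subset_Icc_self
    have hxc : ContinuousAt x (exitTime a b x) := hx.continuousAt hmemnhds
    have hac : ContinuousAt a (exitTime a b x) := ha.continuousAt hmemnhds
    have hbc : ContinuousAt b (exitTime a b x) := hb.continuousAt hmemnhds
    have hstrict : ∀ t, 0 ≤ t → t < exitTime a b x → a t < x t ∧ x t < b t := by
      intro t h0 htπ
      by_contra hcon
      have htS : t ∈ S := by
        left
        refine ⟨⟨h0, le_of_lt (lt_of_lt_of_le htπ hπle1)⟩, ?_⟩
        push_neg at hcon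
        by_cases h : a t < x t
        · exact Or.inr (hcon h)
        · exact Or.inl (not_lt.mp h)
      exact absurd (hπ ▸ csInf_le hSbdd htS) (not_le.mpr htπ)
    -- a π ≤ x π and x π ≤ b π, by left limits
    have hleft : ∀ᶠ t in nhdsWithin (exitTime a b x) (Set.Iio (exitTime a b x)),
        0 ≤ x t - a t ∧ 0 ≤ b t - x t := by
      filter_upwards [Ioo_mem_nhdsLT hπpos] with t ht
      have := hstrict t (le_of_lt ht.1) ht.2
      exact ⟨sub_nonneg.mpr this.1.le, sub_nonneg.mpr this.2.le⟩
    have haxπ : a (exitTime a b x) ≤ x (exitTime a b x) := by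
      have htend : Filter.Tendsto (fun t => x t - a t)
          (nhdsWithin (exitTime a b x) (Set.Iio (exitTime a b x)))
          (nhds (x (exitTime a b x) - a (exitTime a b x))) :=
        ((hxc.sub hac).tendsto).mono_left nhdsWithin_le_nhds
      exact sub_nonneg.mp (ge_of_tendsto htend (hleft.mono fun t ht => ht.1))
    have hxbπ : x (exitTime a b x) ≤ b (exitTime a b x) := by
      have htend : Filter.Tendsto (fun t => b t - x t)
          (nhdsWithin (exitTime a b x) (Set.Iio (exitTime a b x)))
          (nhds (b (exitTime a b x) - x (exitTime a b x))) :=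
        ((hbc.sub hxc).tendsto).mono_left nhdsWithin_le_nhds
      exact sub_nonneg.mp (ge_of_tendsto htend (hleft.mono fun t ht => ht.2))
    rcases hπS.2 with hcase | hcase
    · -- x π = a π : MemC2
      have hxa : x (exitTime a b x) = a (exitTime a b x) := le_antisymm hcase haxπ
      refine Or.inr (Or.inl ⟨hx, hlt, hxa, ?_⟩)
      -- near π, x t < b t
      have hxbπ' : x (exitTime a b x) < b (exitTime a b x) := by
        rw [hxa]; exact hab _ hπS.1
      have hev : ∀ᶠ t in nhds (exitTime a b x), 0 < b t - x t :=
        ((hbc.sub hxc).tendsto).eventually (eventually_gt_nhds (by simp only [Pi.sub_apply]; linarith))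
      rcases Metric.eventually_nhds_iff.mp hev with ⟨δ, hδ, hball⟩
      refine aux_sInf_eq (exitTime a b x) _ _ ?_ (Or.inr rfl) ?_ hreg δ hδ ?_
      · rintro t (⟨h1, h2, h3⟩ | h1)
        · exact Or.inl ⟨h1, h2, Or.inl h3⟩
        · exact Or.inr h1
      · rintro t (⟨h1, _, _⟩ | h1)
        · exact h1
        · rw [mem_singleton_iff] at h1; rw [h1]; exact hlt
      · rintro t (⟨h1, h2, h3⟩ | h1) hpt htδ
        · have hxt : x t < b t := by
            have : dist t (exitTime a b x) < δ := by
              rw [Real.dist_eq, abs_lt]; constructor <;> linarith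
            have := hball this
            linarith
          exact Or.inl ⟨h1, h2, h3.resolve_right (not_lt.mpr hxt.le)⟩
        · exact Or.inr h1
    · -- x π = b π : MemC1
      have hxb : x (exitTime a b x) = b (exitTime a b x) := le_antisymm hxbπ hcase
      refine Or.inl ⟨hx, hlt, hxb, ?_⟩
      have haxπ' : a (exitTime a b x) < x (exitTime a b x) := by
        rw [hxb]; exact hab _ hπS.1
      have hev : ∀ᶠ t in nhds (exitTime a b x), 0 < x t - a t :=
        ((hxc.sub hac).tendsto).eventually (eventually_gt_nhds (by simp only [Pi.sub_apply]; linarith))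
      rcases Metric.eventually_nhds_iff.mp hev with ⟨δ, hδ, hball⟩
      refine aux_sInf_eq (exitTime a b x) _ _ ?_ (Or.inr rfl) ?_ hreg δ hδ ?_
      · rintro t (⟨h1, h2, h3⟩ | h1)
        · exact Or.inl ⟨h1, h2, Or.inr h3⟩
        · exact Or.inr h1
      · rintro t (⟨h1, _, _⟩ | h1)
        · exact h1
        · rw [mem_singleton_iff] at h1; rw [h1]; exact hlt
      · rintro t (⟨h1, h2, h3⟩ | h1) hpt htδ
        · have hat : a t < x t := by
            have : dist t (exitTime a b x) < δ := by
              rw [Real.dist_eq, abs_lt]; constructor <;> linarith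
            have := hball this
            linarith
          exact Or.inl ⟨h1, h2, h3.resolve_left (not_lt.mpr hat.le)⟩
        · exact Or.inr h1
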